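/- Let k ≥ 2, let G be a graph whose vertex set is partitioned into V_1, …, V_k with each V_i an independent set and every edge joining two distinct parts, let L ≥ 1, encode : V(G) → {0,1}^L injective, and σ_i : [k]∖{i} → [k−1] a bijection for each i ∈ [k], with associated set cover instance J(G). If X ⊆ E(G) covers the universe of J(G) and |X| ≤ C(k,2), then there exist v_1 ∈ V_1, …, v_k ∈ V_k that are pairwise adjacent in G (i.e., G contains a k-clique). -/

import Mathlib

/-- The adjacency relation of the set cover instance `J(G)` associated with a graph `G`
whose vertices are partitioned into `V_1, …, V_k` via `part`: the left side is `E(G)`,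
the universe is `[k] × ([k−1]^{0,1}) × [L]`, and an edge `{v, w}` with `v ∈ V_i`,
`w ∈ V_j` (`i ≠ j`) is adjacent to `(i', f, ℓ)` iff (`i' = i` and
`f (encode v ℓ) = σ_i j`) or (`i' = j` and `f (encode w ℓ) = σ_j i`). -/
def edgeAdj {V : Type} {k L : ℕ} (part : V → Fin k)
    (encode : V → Fin L → Bool)
    (σ : (i : Fin k) → {j : Fin k // j ≠ i} → Fin (k - 1))
    (e : Sym2 V) (u : Fin k × (Bool → Fin (k - 1)) × Fin L) : Prop :=
  ∃ v w : V, e = s(v, w) ∧ part v = u.1 ∧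
    ∃ hw : part w ≠ u.1, u.2.1 (encode v u.2.2) = σ u.1 ⟨part w, hw⟩

/-- Let `k ≥ 2`, `G` a graph whose vertex set is partitioned into
`V_1, …, V_k` with each `V_i` independent and every edge joining two distinct parts,
`L ≥ 1`, `encode : V(G) → {0,1}^L` injective, and `σ_i : [k]∖{i} → [k−1]` a bijection
for each `i`, with associated set cover instance `J(G)`.  If `X ⊆ E(G)` covers the
universe of `J(G)` and `|X| ≤ C(k,2)`, then there exist `v_1 ∈ V_1, …, v_k ∈ V_k`
that are pairwise adjacent in `G` (i.e. `G` contains a `k`-clique). -/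
theorem cover_gives_clique
    (k L : ℕ) (hk : 2 ≤ k) (hL : 1 ≤ L)
    (V : Type) (G : SimpleGraph V)
    (part : V → Fin k)
    (hpart : ∀ v w : V, G.Adj v w → part v ≠ part w)
    (encode : V → Fin L → Bool) (henc : Function.Injective encode)
    (σ : (i : Fin k) → {j : Fin k // j ≠ i} → Fin (k - 1))
    (hσ : ∀ i, Function.Bijective (σ i))
    (X : Finset (Sym2 V)) (hXE : ∀ e ∈ X, e ∈ G.edgeSet)
    (hXcov : ∀ u : Fin k × (Bool → Fin (k - 1)) × Fin L,
      ∃ e ∈ X, edgeAdj part encode σ e u)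
    (hXcard : X.card ≤ Nat.choose k 2) :
    ∃ v : Fin k → V, (∀ i, part (v i) = i) ∧
      ∀ i j, i ≠ j → G.Adj (v i) (v j) := by
  classical
  set φ : Sym2 V → Sym2 (Fin k) := Sym2.map part with hφ
  have ℓ₀ : Fin L := ⟨0, hL⟩
  -- For each ordered pair (i, j) with j ≠ i, there's an edge of X from V_i to V_j.
  have hpick : ∀ i j : Fin k, j ≠ i → ∃ v w : V,
      s(v, w) ∈ X ∧ part v = i ∧ part w = j ∧ G.Adj v w := by
    intro i j hji
    obtain ⟨e, heX, v, w, hevw, hpv, hw, hcond⟩ :=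
      hXcov (i, fun _ => σ i ⟨j, hji⟩, ℓ₀)
    have hwj : part w = j := by
      have := (hσ i).1 hcond
      exact (congrArg Subtype.val this).symm
    have hadj : G.Adj v w := by
      have := hXE e heX
      rw [hevw] at this
      exact this
    exact ⟨v, w, hevw ▸ heX, hpv, hwj, hadj⟩
  choose ev ew hmem hpv hpw hadj using hpick
  -- X maps onto the edge set of the complete graph on Fin k, injectively.
  have himg : X.image φ = (⊤ : SimpleGraph (Fin k)).edgeFinset := by
    apply Finset.Subset.antisymm
    · intro p hp
      obtain ⟨e, heX, rfl⟩ := Finset.mem_image.mp hp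
      have he := hXE e heX
      induction e with
      | _ v w =>
        rw [SimpleGraph.mem_edgeSet] at he
        simpa [φ, SimpleGraph.mem_edgeFinset, SimpleGraph.top_adj] using hpart v w he
    · intro p hp
      induction p with
      | _ i j =>
        rw [SimpleGraph.mem_edgeFinset, SimpleGraph.mem_edgeSet, SimpleGraph.top_adj] at hp
        refine Finset.mem_image.mpr ⟨s(ev i j (Ne.symm hp), ew i j (Ne.symm hp)),
          hmem i j (Ne.symm hp), ?_⟩
        simp [φ, hpv, hpw]
  have hcardimg : (X.image φ).card = Nat.choose k 2 := by
    rw [himg, SimpleGraph.card_edgeFinset_top_eq_card_choose_two, Fintype.card_fin]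
  have hinj : Set.InjOn φ X := by
    apply Finset.injOn_of_card_image_eq
    have h1 : (X.image φ).card ≤ X.card := Finset.card_image_le
    omega
  -- Uniqueness of the edge over each pair.
  have huniq : ∀ (i j : Fin k) (hji : j ≠ i) (e : Sym2 V), e ∈ X → φ e = s(i, j) →
      e = s(ev i j hji, ew i j hji) := by
    intro i j hji e heX hpe
    apply hinj heX (hmem i j hji)
    rw [hpe]
    simp [φ, hpv, hpw]
  -- All edges of X touching V_i have the same endpoint in V_i.
  have hsame : ∀ (i : Fin k) (j j' : Fin k) (hji : j ≠ i) (hji' : j' ≠ i),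
      ev i j hji = ev i j' hji' := by
    intro i j j' hji hji'
    by_contra hne
    have hencne : encode (ev i j hji) ≠ encode (ev i j' hji') :=
      fun h => hne (henc h)
    obtain ⟨ℓ, hℓ⟩ := Function.ne_iff.mp hencne
    -- total versions
    set w' : Fin k → V := fun m => if h : m ≠ i then ev i m h else ev i j hji with hw'
    set σ' : Fin k → Fin (k - 1) := fun m =>
      if h : m ≠ i then σ i ⟨m, h⟩ else ⟨0, by omega⟩ with hσ'
    set S : Bool → Finset (Fin k) := fun c =>
      Finset.univ.filter (fun m => m ≠ i ∧ encode (w' m) ℓ = c) with hS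
    have hw'j : w' j = ev i j hji := by simp [hw', hji]
    have hw'j' : w' j' = ev i j' hji' := by simp [hw', hji']
    have hScard : ∀ c, (S c).card < k - 1 := by
      intro c
      have hsub : S c ⊆ Finset.univ.erase i := by
        intro m hm
        rw [hS, Finset.mem_filter] at hm
        exact Finset.mem_erase.mpr ⟨hm.2.1, Finset.mem_univ m⟩
      have hmiss : ∃ m, m ∈ Finset.univ.erase i ∧ m ∉ S c := by
        by_cases hc : encode (w' j) ℓ = c
        · refine ⟨j', Finset.mem_erase.mpr ⟨hji', Finset.mem_univ _⟩, ?_⟩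
          intro hmemS
          rw [hS, Finset.mem_filter] at hmemS
          exact hℓ (by rw [← hw'j, ← hw'j', hc, hmemS.2.2])
        · refine ⟨j, Finset.mem_erase.mpr ⟨hji, Finset.mem_univ _⟩, ?_⟩
          intro hmemS
          rw [hS, Finset.mem_filter] at hmemS
          exact hc hmemS.2.2
      obtain ⟨m, hm1, hm2⟩ := hmiss
      have hss : S c ⊂ Finset.univ.erase i :=
        Finset.ssubset_iff_of_subset hsub |>.mpr ⟨m, hm1, hm2⟩
      have := Finset.card_lt_card hss
      rwa [Finset.card_erase_of_mem (Finset.mem_univ i), Finset.card_univ,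
        Fintype.card_fin] at this
    have hex : ∀ c : Bool, ∃ t : Fin (k - 1), t ∉ (S c).image σ' := by
      intro c
      by_contra h
      push_neg at h
      have : ((S c).image σ') = Finset.univ := Finset.eq_univ_iff_forall.mpr h
      have h1 : ((S c).image σ').card ≤ (S c).card := Finset.card_image_le
      rw [this, Finset.card_univ, Fintype.card_fin] at h1
      exact absurd (hScard c) (by omega)
    choose t ht using hex
    obtain ⟨e, heX, v, w, hevw, hvp₀, hwne, hcond₀⟩ := hXcov (i, t, ℓ)
    have hvp : part v = i := hvp₀
    have hmi : part w ≠ i := hwne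
    set m := part w with hm
    have hcond : t (encode v ℓ) = σ i ⟨m, hmi⟩ := hcond₀
    have hpe : φ e = s(i, m) := by rw [hevw]; simp [φ, hvp]; exact Or.inl rfl
    have he' := huniq i m hmi e heX hpe
    rw [hevw] at he'
    have hv : v = ev i m hmi := by
      rcases Sym2.eq_iff.mp he' with ⟨h1, _⟩ | ⟨h1, h2⟩
      · exact h1
      · exfalso; apply hmi
        rw [← hpw i m hmi, ← h1]
        exact hvp
    have hmS : m ∈ S (encode v ℓ) := by
      rw [hS, Finset.mem_filter]
      refine ⟨Finset.mem_univ m, hmi, ?_⟩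
      have hwm : w' m = ev i m hmi := by simp [hw', hmi]
      rw [hwm, ← hv]
    have hmem2 : σ' m ∈ (S (encode v ℓ)).image σ' :=
      Finset.mem_image_of_mem σ' hmS
    have hσ2 : σ' m = t (encode v ℓ) := by
      rw [hσ']
      simp only [hmi, dif_pos, ne_eq, not_false_eq_true]
      exact hcond.symm
    rw [hσ2] at hmem2
    exact ht (encode v ℓ) hmem2
  -- Build the clique.
  have hother : ∀ i : Fin k, ∃ j : Fin k, j ≠ i := by
    intro i
    exact Fintype.exists_ne_of_one_lt_card (by simp; omega) i
  choose other hother2 using hother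
  refine ⟨fun i => ev i (other i) (hother2 i), fun i => hpv _ _ _, ?_⟩
  intro i j hij
  have hji : j ≠ i := Ne.symm hij
  -- the edge between V_i and V_j
  have hswap : ew i j hji = ev j i hij := by
    have h1 : φ s(ev j i hij, ew j i hij) = s(i, j) := by
      simp [φ, hpv, hpw, Sym2.eq_swap]
    have h2 := huniq i j hji _ (hmem j i hij) h1
    rcases Sym2.eq_iff.mp h2 with ⟨ha, _⟩ | ⟨ha, hb⟩
    · exfalso
      apply hji
      rw [← hpv j i hij, ha, hpv]
    · exact ha.symm
  have hadj2 := hadj i j hji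
  rw [hswap] at hadj2
  show G.Adj (ev i (other i) (hother2 i)) (ev j (other j) (hother2 j))
  rw [hsame i (other i) j (hother2 i) hji, hsame j (other j) i (hother2 j) hij]
  exact hadj2
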